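/- Let a be a nonzero element of the algebraic closure of F_2, and let n > 1 be an odd integer. Then 0 is the unique critical value of f(X) := D_n(X, a): every root c of f'(X) satisfies f(c) = 0. Moreover 0 is a simple root of f(X) and every other root of f(X) has multiplicity exactly 2. -/

import Mathlib

open Polynomial

section Gen
variable {R : Type*} [CommRing R]

lemma dickson_eval_add (y z : R) (n : ℕ) :
    (dickson 1 (y * z) n).eval (y + z) = y ^ n + z ^ n := by
  induction n using Nat.strong_induction_on with
  | _ n ih =>
    match n with
    | 0 => simp [dickson_zero]; norm_num
    | 1 => simp [dickson_one]
    | (k+2) =>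
      have h1 := ih (k+1) (by omega)
      have h0 := ih k (by omega)
      rw [dickson_add_two]
      simp only [eval_sub, eval_mul, eval_X, eval_C, h1, h0]
      ring
end Gen

section Char2
variable {K : Type*} [Field K] [CharP K 2]

lemma dickson_zero' (a : K) : dickson 1 a 0 = 0 := by
  have h2 : (2 : K[X]) = 0 := CharTwo.two_eq_zero
  rw [dickson_zero, Nat.cast_one, show (3:K[X]) = 2 + 1 by norm_num, h2]
  ring

lemma dickson_rec (a : K) (n : ℕ) :
    dickson 1 a (n+2) = X * dickson 1 a (n+1) + C a * dickson 1 a n := by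
  rw [dickson_add_two, sub_eq_add_neg, CharTwo.neg_eq]
lemma dickson_deriv (a : K) (n : ℕ) :
    Polynomial.derivative (dickson 1 a (2*n)) = 0 ∧
    X * Polynomial.derivative (dickson 1 a (2*n+1)) = dickson 1 a (2*n+1) := by
  induction n with
  | zero => simp [dickson_zero', dickson_one]
  | succ k ih =>
    obtain ⟨h0, h1⟩ := ih
    have e0 : 2*(k+1) = (2*k) + 2 := by ring
    have e1 : 2*(k+1)+1 = (2*k+1) + 2 := by ring
    have c0 : Polynomial.derivative (dickson 1 a (2*(k+1))) = 0 := by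
      rw [e0, dickson_rec]
      simp only [derivative_add, derivative_mul, derivative_X, derivative_C, h0, one_mul,
        zero_mul, mul_zero, add_zero, zero_add, h1, CharTwo.add_self_eq_zero]
    refine ⟨c0, ?_⟩
    have e2 : 2*k+1+1 = 2*(k+1) := by ring
    rw [e1, dickson_rec, derivative_add, derivative_mul, derivative_mul, derivative_X,
      derivative_C, e2, c0, mul_zero, add_zero, zero_mul, zero_add, one_mul, mul_add,
      mul_left_comm, h1]

lemma dickson_monic (a : K) (n : ℕ) :
    (dickson 1 a (n+1)).Monic ∧ (dickson 1 a (n+1)).natDegree = n+1 := by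
  induction n using Nat.strong_induction_on with
  | _ n ih =>
    match n with
    | 0 =>
      rw [show (0:ℕ)+1 = 1 from rfl, dickson_one]
      exact ⟨monic_X, natDegree_X⟩
    | 1 =>
      have : dickson 1 a 2 = X * X := by
        rw [show (2:ℕ) = 0 + 2 by ring, dickson_rec, dickson_zero', dickson_one, mul_zero,
          add_zero]
      rw [this]
      exact ⟨monic_X.mul monic_X, by simp⟩
    | (k+2) =>
      obtain ⟨m1, d1⟩ := ih (k+1) (by omega)
      obtain ⟨m0, d0⟩ := ih k (by omega)
      rw [show k+2+1 = (k+1)+2 by ring, dickson_rec]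
      have mp : (X * dickson 1 a (k+1+1)).Monic := monic_X.mul m1
      have dp : (X * dickson 1 a (k+1+1)).natDegree = k+3 := by
        rw [Monic.natDegree_mul monic_X m1, natDegree_X, d1]; omega
      have hlt : (C a * dickson 1 a (k+1)).degree < (X * dickson 1 a (k+1+1)).degree := by
        apply lt_of_le_of_lt degree_le_natDegree
        rw [degree_eq_natDegree mp.ne_zero, dp]
        have h3 : (C a * dickson 1 a (k+1)).natDegree < k+3 := by
          have := natDegree_C_mul_le a (dickson 1 a (k+1))
          omega
        exact_mod_cast h3
      refine ⟨mp.add_of_left hlt, ?_⟩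
      rw [natDegree_add_eq_left_of_degree_lt hlt, dp]

end Char2

local notation "K" => AlgebraicClosure (ZMod 2)


theorem statement9 (a : AlgebraicClosure (ZMod 2)) (ha : a ≠ 0)
    (n : ℕ) (hn : 1 < n) (hodd : Odd n) :
    (∀ c : AlgebraicClosure (ZMod 2),
        (Polynomial.dickson 1 a n).derivative.eval c = 0 →
        (Polynomial.dickson 1 a n).eval c = 0) ∧
    (Polynomial.dickson 1 a n).rootMultiplicity 0 = 1 ∧
    (∀ c : AlgebraicClosure (ZMod 2), c ≠ 0 →
        (Polynomial.dickson 1 a n).eval c = 0 →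
        (Polynomial.dickson 1 a n).rootMultiplicity c = 2) := by
  classical
  obtain ⟨m, hm⟩ := hodd
  have hm1 : 1 ≤ m := by omega
  have htwo : (2 : K) = 0 := CharTwo.two_eq_zero
  set f : K[X] := dickson 1 a n with hf
  have hfd : X * Polynomial.derivative f = f := by
    rw [hf, hm]; exact (dickson_deriv a m).2
  have claim1 : ∀ c : K, (Polynomial.derivative f).eval c = 0 → f.eval c = 0 := by
    intro c hc
    have := congrArg (eval c) hfd
    simp only [eval_mul, eval_X, hc, mul_zero] at this
    exact this.symm
  -- second derivative vanishes
  have hf'' : Polynomial.derivative (Polynomial.derivative f) = 0 := by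
    have h := congrArg Polynomial.derivative hfd
    rw [derivative_mul, derivative_X, one_mul] at h
    have h2 : (X : K[X]) * Polynomial.derivative (Polynomial.derivative f) = 0 := by
      linear_combination h
    exact (mul_eq_zero.mp h2).resolve_left X_ne_zero
  -- the square root g of f'
  set g : K[X] :=
    Polynomial.contract 2 ((Polynomial.derivative f).map
      ((frobeniusEquiv K 2).symm : K →+* K)) with hg
  have hgsq : g ^ 2 = Polynomial.derivative f := by
    have hd : Polynomial.derivative ((Polynomial.derivative f).map
        ((frobeniusEquiv K 2).symm : K →+* K)) = 0 := by
      rw [derivative_map, hf'', Polynomial.map_zero]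
    have he := Polynomial.expand_contract 2 hd (by norm_num)
    have hc := Polynomial.map_frobenius_expand (p := 2) ((Polynomial.contract 2
      ((Polynomial.derivative f).map ((frobeniusEquiv K 2).symm : K →+* K))))
    rw [he, Polynomial.map_map] at hc
    rw [← hg] at hc
    rw [← hc]
    clear hc
    have : (frobenius K 2).comp ((frobeniusEquiv K 2).symm : K →+* K) = RingHom.id K := by
      ext x; exact frobenius_apply_frobeniusEquiv_symm K 2 x
    rw [this, Polynomial.map_id]
  have hfg : f = X * g ^ 2 := by rw [hgsq, hfd]
  -- degrees
  have hfmonic : f.Monic ∧ f.natDegree = n := by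
    rw [hf, show n = (n-1)+1 by omega]; exact dickson_monic a (n-1)
  have hf0 : f ≠ 0 := hfmonic.1.ne_zero
  have hg0 : g ≠ 0 := by
    intro h; rw [h] at hfg; simp at hfg; exact hf0 hfg
  have hgdeg : g.natDegree = m := by
    have h1 : f.natDegree = 1 + 2 * g.natDegree := by
      rw [hfg, natDegree_mul X_ne_zero (pow_ne_zero 2 hg0), natDegree_X, natDegree_pow]
    have := hfmonic.2
    omega
  -- roots of unity
  haveI : NeZero ((n : K)) := ⟨by
    rw [hm]; push_cast; rw [htwo]; simp⟩
  obtain ⟨ζ, hζ⟩ := HasEnoughRootsOfUnity.exists_primitiveRoot K n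
  have hζn0 : ζ ≠ 0 := hζ.ne_zero (by omega)
  set y : ℕ → K := fun i => (frobeniusEquiv K 2).symm (a * ζ ^ i) with hy
  have hysq : ∀ i, (y i) ^ 2 = a * ζ ^ i := by
    intro i
    have := frobenius_apply_frobeniusEquiv_symm K 2 (a * ζ ^ i)
    rwa [frobenius_def] at this
  have hyne : ∀ i, y i ≠ 0 := by
    intro i h
    have := hysq i
    rw [h] at this
    exact (mul_ne_zero ha (pow_ne_zero i hζn0)) (by simpa using this.symm)
  set x : ℕ → K := fun i => y i + a * (y i)⁻¹ with hx
  have hyz : ∀ i, y i * (a * (y i)⁻¹) = a := by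
    intro i
    rw [mul_comm a, ← mul_assoc, mul_inv_cancel₀ (hyne i), one_mul]
  have hroot : ∀ i, f.eval (x i) = 0 := by
    intro i
    have he : f.eval (x i) = (y i) ^ n + (a * (y i)⁻¹) ^ n := by
      have h := dickson_eval_add (y i) (a * (y i)⁻¹) n
      rw [hyz i] at h
      simp only [hf, hx]
      exact h
    have hyn : (y i) ^ (2 * n) = a ^ n := by
      rw [pow_mul, hysq i, mul_pow, ← pow_mul, mul_comm i n, pow_mul, hζ.pow_eq_one, one_pow,
        mul_one]
    have hz : (a * (y i)⁻¹) ^ n = (y i) ^ n := by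
      rw [mul_pow, ← hyn, inv_pow, two_mul, pow_add]
      field_simp
    rw [he, hz, CharTwo.add_self_eq_zero]
  have hxne : ∀ i ∈ Finset.Icc 1 m, x i ≠ 0 := by
    intro i hi h
    rw [Finset.mem_Icc] at hi
    simp only [hx] at h
    have h2 : (y i) ^ 2 = a := by
      have : y i * (y i + a * (y i)⁻¹) = y i * 0 := by rw [h]
      rw [mul_add, hyz i, mul_zero, ← sq] at this
      linear_combination this - a * htwo
    rw [hysq i] at h2
    have : ζ ^ i = 1 := by
      field_simp at h2
      exact h2
    have := (hζ.pow_eq_one_iff_dvd i).mp this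
    have := Nat.le_of_dvd (by omega) this
    omega
  have hinj : Set.InjOn x (Finset.Icc 1 m) := by
    intro i hi j hj hij
    rw [Finset.coe_Icc, Set.mem_Icc] at hi hj
    have key : (y i + y j) * (y i * y j + a) = 0 := by
      have h1 : (y i + a * (y i)⁻¹) * (y i * y j) = (y j + a * (y j)⁻¹) * (y i * y j) := by
        simp only [hx] at hij
        rw [hij]
      have hii : y i * (y i)⁻¹ = 1 := mul_inv_cancel₀ (hyne i)
      have hjj : y j * (y j)⁻¹ = 1 := mul_inv_cancel₀ (hyne j)
      linear_combination h1 - a * y j * hii + a * y i * hjj + (y i * y j^2 + a * y i) * htwo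
    rcases mul_eq_zero.mp key with h | h
    · have hyij : y i = y j := by linear_combination h - y j * htwo
      have : a * ζ ^ i = a * ζ ^ j := by rw [← hysq i, ← hysq j, hyij]
      have : ζ ^ i = ζ ^ j := mul_left_cancel₀ ha this
      exact hζ.pow_inj (by omega) (by omega) this
    · exfalso
      have hyij : y i * y j = a := by linear_combination h - a * htwo
      have : (a * ζ ^ i) * (a * ζ ^ j) = a * a := by
        rw [← hysq i, ← hysq j, ← mul_pow, hyij, sq]
      have hone : ζ ^ (i + j) = 1 := by
        have h4 : a * a * (ζ ^ (i+j)) = a * a * 1 := by rw [pow_add]; ring_nf; linear_combination this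
        exact mul_left_cancel₀ (mul_ne_zero ha ha) h4
      have := (hζ.pow_eq_one_iff_dvd (i+j)).mp hone
      have := Nat.le_of_dvd (by omega) this
      omega
  set S : Finset K := (Finset.Icc 1 m).image x with hS
  have hcardS : S.card = m := by
    rw [hS, Finset.card_image_of_injOn hinj, Nat.card_Icc]
    omega
  have hgev : ∀ i ∈ Finset.Icc 1 m, g.eval (x i) = 0 := by
    intro i hi
    have h1 : (x i) * (g.eval (x i)) ^ 2 = 0 := by
      have := hroot i
      rw [hfg] at this
      simpa using this
    rcases mul_eq_zero.mp h1 with h | h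
    · exact absurd h (hxne i hi)
    · exact pow_eq_zero_iff (by norm_num) |>.mp h
  have hSsub : S.val ≤ g.roots := by
    rw [Multiset.le_iff_count]
    intro c
    by_cases hc : c ∈ S
    · rw [Multiset.count_eq_one_of_mem S.nodup hc]
      rw [Nat.one_le_iff_ne_zero, ← Nat.pos_iff_ne_zero, Multiset.count_pos]
      obtain ⟨i, hi, rfl⟩ := Finset.mem_image.mp hc
      exact (mem_roots hg0).mpr (hgev i hi)
    · rw [Multiset.count_eq_zero_of_notMem hc]
      omega
  have hroots : g.roots = S.val := by
    refine (Multiset.eq_of_le_of_card_le hSsub ?_).symm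
    have h1 : Multiset.card g.roots ≤ m := hgdeg ▸ g.card_roots'
    simpa [hcardS] using h1
  -- 0 is not a root of g
  have hg0ev : g.eval 0 ≠ 0 := by
    intro h
    have : (0 : K) ∈ g.roots := (mem_roots hg0).mpr h
    rw [hroots] at this
    obtain ⟨i, hi, hxi⟩ := Finset.mem_image.mp (show (0 : K) ∈ (Finset.Icc 1 m).image x from this)
    exact hxne i hi hxi
  have hXmul : (X : K[X]) * g ^ 2 ≠ 0 := by rw [← hfg]; exact hf0
  refine ⟨claim1, ?_, ?_⟩
  · rw [hfg, rootMultiplicity_mul hXmul]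
    have h1 : rootMultiplicity (0:K) X = 1 := by
      rw [show (X : K[X]) = X - C 0 by simp, rootMultiplicity_X_sub_C_self]
    have h2 : rootMultiplicity (0:K) (g ^ 2) = 0 := by
      apply rootMultiplicity_eq_zero
      simp [IsRoot, hg0ev]
    omega
  · intro c hc hcf
    have hgc : g.eval c = 0 := by
      rw [hfg] at hcf
      simp only [eval_mul, eval_X, eval_pow] at hcf
      rcases mul_eq_zero.mp hcf with h | h
      · exact absurd h hc
      · exact pow_eq_zero_iff (by norm_num) |>.mp h
    have hcS : c ∈ S := by
      have : c ∈ g.roots := (mem_roots hg0).mpr hgc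
      rw [hroots] at this
      exact this
    have hmc : rootMultiplicity c g = 1 := by
      rw [← count_roots, hroots, Multiset.count_eq_one_of_mem S.nodup hcS]
    rw [hfg, rootMultiplicity_mul hXmul]
    have h1 : rootMultiplicity c X = 0 := by
      apply rootMultiplicity_eq_zero
      simp [IsRoot, hc]
    have h2 : rootMultiplicity c (g ^ 2) = 2 := by
      rw [sq, rootMultiplicity_mul (mul_ne_zero hg0 hg0), hmc]
    omega
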